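/- Split-conformal validity under interval censoring: suppose (X_i, Y_i, Y_i^L, Y_i^U), i = 1, …, n+1, are i.i.d. with Y_i^L ≤ Y_i ≤ Y_i^U almost surely. Fix a measurable function Ĉ (depending only on a training subset I_1 ⊂ {1,…,n}) assigning to each x a finite disjoint union of closed intervals ⊔_m [τ_{0m}(x), τ_{1m}(x)]. For j in the calibration set I_2 = {1,…,n} \ I_1 with |I_2| = n_2, compute scores s_j = min_m max(τ_{0m}(X_j) − Y_j^L, Y_j^U − τ_{1m}(X_j)), let ϑ be the ⌈(1−α)(n_2+1)⌉-th smallest score, and set C̃(x) = ⋃_m [τ_{0m}(x) − ϑ, τ_{1m}(x) + ϑ]. Then P(Y_{n+1} ∈ C̃(X_{n+1})) ≥ 1 − α. -/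

import Mathlib

open MeasureTheory ProbabilityTheory Finset

/-! ### Auxiliary lemmas -/

section Aux

lemma scvic_sorted_le_get_iff (c : EReal) : ∀ (l : List EReal), l.Pairwise (· ≤ ·) →
    ∀ (k : ℕ) (hk : k < l.length),
    (c ≤ l.get ⟨k, hk⟩ ↔ l.countP (fun e => decide (e < c)) ≤ k) := by
  intro l
  induction l with
  | nil => intro _ k hk; simp at hk
  | cons a l ih =>
    intro hl k hk
    rw [List.pairwise_cons] at hl
    obtain ⟨ha, hl⟩ := hl
    by_cases hac : a < c
    · cases k with
      | zero =>
        simp only [List.get, List.countP_cons, hac, decide_true, if_true]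
        constructor
        · intro h; exact absurd (lt_of_lt_of_le hac h) (lt_irrefl a)
        · intro h; omega
      | succ k =>
        simp only [List.get, List.countP_cons, hac, decide_true, if_true]
        rw [ih hl k (by simpa using hk)]
        omega
    · have hca : c ≤ a := not_lt.1 hac
      have hcount : l.countP (fun e => decide (e < c)) = 0 := by
        rw [List.countP_eq_zero]
        intro e he
        simp only [decide_eq_true_eq]
        exact not_lt.2 (hca.trans (ha e he))
      constructor
      · intro _
        simp [List.countP_cons, hac, hcount]
      · intro _
        cases k with
        | zero => exact hca
        | succ k =>
          simp only [List.get]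
          exact hca.trans (ha _ (List.get_mem l _))

end Aux

/-- The `k`-th order statistic (1-based) of the values `v 0, …, v (n-1)`, viewed in
`EReal`, defined as `⊤` (i.e. `+∞`) when `k > n`. -/
noncomputable def orderStat (n : ℕ) (v : Fin n → ℝ) (k : ℕ) : EReal :=
  (((Finset.univ.val.map (fun i => (v i : EReal))).sort (· ≤ ·)).getD (k - 1) ⊤)

section Aux2

lemma scvic_countP_eq (n : ℕ) (w : Fin n → ℝ) (c : ℝ) :
    (((Finset.univ.val.map (fun i => ((w i : ℝ) : EReal))).sort (· ≤ ·)).countP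
        (fun e => decide (e < (c : EReal))))
      = (Finset.univ.filter fun j => w j < c).card := by
  rw [← Multiset.coe_countP, Multiset.sort_eq, Multiset.countP_map]
  have h : (Multiset.filter (fun a => ((w a : ℝ) : EReal) < (c : EReal)) Finset.univ.val)
      = (Finset.univ.filter fun j => w j < c).val := by
    rw [Finset.filter_val]
    apply Multiset.filter_congr
    intro x _
    exact EReal.coe_lt_coe_iff
  rw [h, ← Finset.card_def]

lemma scvic_le_orderStat_iff {n k : ℕ} (hk : 1 ≤ k) (w : Fin n → ℝ) (c : ℝ) :
    ((c : EReal) ≤ orderStat n w k ↔ (Finset.univ.filter fun j => w j < c).card < k) := by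
  classical
  set l := ((Finset.univ.val.map (fun i => ((w i : ℝ) : EReal))).sort (· ≤ ·)) with hl
  have hlen : l.length = n := by
    rw [hl, Multiset.length_sort, Multiset.card_map]
    simp
  have hsorted : l.Pairwise (· ≤ ·) := Multiset.pairwise_sort _ _
  have hcount : l.countP (fun e => decide (e < (c : EReal)))
      = (Finset.univ.filter fun j => w j < c).card := scvic_countP_eq n w c
  by_cases hkn : k - 1 < n
  · have h1 : orderStat n w k = l.get ⟨k - 1, by omega⟩ := by
      rw [orderStat, ← hl, List.getD_eq_getElem _ _ (by omega), List.get_eq_getElem]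
    rw [h1, scvic_sorted_le_get_iff c l hsorted (k-1) (by omega), hcount]
    omega
  · have h1 : orderStat n w k = ⊤ := by
      rw [orderStat, ← hl, List.getD_eq_default _ _ (by omega)]
    rw [h1]
    have h2 : (Finset.univ.filter fun j => w j < c).card ≤ n := by
      refine le_trans (Finset.card_filter_le _ _) ?_
      simp
    constructor
    · intro _; omega
    · intro _; exact le_top

lemma scvic_orderStat_cases (n k : ℕ) (w : Fin n → ℝ) :
    orderStat n w k = ⊤ ∨ ∃ t : ℝ, orderStat n w k = (t : EReal) := by
  classical
  set l := ((Finset.univ.val.map (fun i => ((w i : ℝ) : EReal))).sort (· ≤ ·)) with hl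
  by_cases hkn : k - 1 < l.length
  · right
    have hmem : l.getD (k-1) ⊤ ∈ l := by
      rw [List.getD_eq_getElem _ _ hkn]
      exact List.getElem_mem _
    have h : l.getD (k-1) ⊤ ∈ (Finset.univ.val.map (fun i => ((w i : ℝ) : EReal))) := by
      rw [← Multiset.sort_eq (Finset.univ.val.map (fun i => ((w i : ℝ) : EReal))) (· ≤ ·)]
      exact_mod_cast hmem
    obtain ⟨i, _, hi⟩ := Multiset.mem_map.1 h
    exact ⟨w i, by rw [orderStat, ← hl, ← hi]⟩
  · left
    rw [orderStat, ← hl, List.getD_eq_default _ _ (by omega)]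

lemma scvic_count_lowrank {N k : ℕ} (hk : k ≤ N) (v : Fin N → ℝ) :
    k ≤ (univ.filter fun i => (univ.filter fun j => v j < v i).card < k).card := by
  classical
  set σ := Tuple.sort v with hσ
  have hmono : Monotone (v ∘ σ) := Tuple.monotone_sort v
  set S : Finset (Fin N) := univ.filter (fun p => (p : ℕ) < k) with hS
  have hcardS : S.card = k := by
    have h : S = Finset.map (Fin.castLEEmb hk) univ := by
      ext p
      simp only [hS, Finset.mem_filter, Finset.mem_univ, true_and, Finset.mem_map]
      constructor
      · intro hp
        exact ⟨⟨p, hp⟩, by simp⟩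
      · rintro ⟨q, -, rfl⟩
        exact q.isLt
    rw [h, Finset.card_map, Finset.card_univ, Fintype.card_fin]
  have hsub : S.image σ ⊆ univ.filter fun i => (univ.filter fun j => v j < v i).card < k := by
    intro i hi
    obtain ⟨p, hp, rfl⟩ := Finset.mem_image.1 hi
    rw [hS, Finset.mem_filter] at hp
    refine Finset.mem_filter.2 ⟨Finset.mem_univ _, ?_⟩
    have hcard_eq : (univ.filter fun j => v j < v (σ p)).card
        = (univ.filter fun q => v (σ q) < v (σ p)).card := by
      refine (Finset.card_bij' (fun q _ => σ q) (fun j _ => σ.symm j) ?_ ?_ ?_ ?_).symm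
      · intro q hq
        rw [Finset.mem_filter] at hq ⊢
        exact ⟨Finset.mem_univ _, hq.2⟩
      · intro j hj
        rw [Finset.mem_filter] at hj ⊢
        refine ⟨Finset.mem_univ _, ?_⟩
        simpa using hj.2
      · intro q _; simp
      · intro j _; simp
    rw [hcard_eq]
    have hsub2 : (univ.filter fun q => v (σ q) < v (σ p)) ⊆ Finset.Iio p := by
      intro q hq
      rw [Finset.mem_filter] at hq
      rw [Finset.mem_Iio]
      by_contra hqp
      exact absurd (hmono (not_lt.1 hqp)) (not_le.2 hq.2)
    calc (univ.filter fun q => v (σ q) < v (σ p)).card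
        ≤ (Finset.Iio p).card := Finset.card_le_card hsub2
      _ = (p : ℕ) := Fin.card_Iio p
      _ < k := hp.2
  calc k = S.card := hcardS.symm
    _ = (S.image σ).card := (Finset.card_image_of_injective S σ.injective).symm
    _ ≤ _ := Finset.card_le_card hsub

lemma scvic_measurable_inf' {α : Type*} [MeasurableSpace α] {M : ℕ}
    (s : Finset (Fin M)) (hs : s.Nonempty)
    (f : Fin M → α → ℝ) (hf : ∀ m, Measurable (f m)) :
    Measurable fun a => s.inf' hs (fun m => f m a) := by
  classical
  induction hs using Finset.Nonempty.cons_induction with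
  | singleton m => simpa using hf m
  | cons m s hm hs ih =>
      have h : (fun a => (Finset.cons m s hm).inf' (Finset.cons_nonempty hm) (fun m' => f m' a))
          = fun a => min (f m a) (s.inf' hs fun m' => f m' a) := by
        funext a
        rw [Finset.inf'_cons]
      rw [h]
      exact (hf m).min ih

def scvicRankSet (N k : ℕ) (i : Fin N) : Set (Fin N → ℝ) :=
  {v | (Finset.univ.filter fun j => v j < v i).card < k}

lemma scvic_measurableSet_rankSet (N k : ℕ) (i : Fin N) :
    MeasurableSet (scvicRankSet N k i) := by
  classical
  have hmeas : Measurable fun v : Fin N → ℝ =>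
      (Finset.univ.filter fun j => v j < v i).card := by
    have h : (fun v : Fin N → ℝ => (Finset.univ.filter fun j => v j < v i).card)
        = fun v => ∑ j : Fin N, if v j < v i then 1 else 0 := by
      funext v; rw [Finset.card_filter]
    rw [h]
    refine Finset.measurable_sum _ fun j _ => ?_
    exact Measurable.ite
      (measurableSet_lt (measurable_pi_apply j) (measurable_pi_apply i))
      measurable_const measurable_const
  exact hmeas (MeasurableSet.of_discrete (s := {x : ℕ | x < k}))

lemma scvic_rankSet_swap (N k : ℕ) (i i₀ : Fin N) :
    (fun f : Fin N → ℝ => f ∘ (Equiv.swap i i₀)) ⁻¹' scvicRankSet N k i₀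
      = scvicRankSet N k i := by
  classical
  ext v
  simp only [scvicRankSet, Set.mem_preimage, Set.mem_setOf_eq, Function.comp,
    Equiv.swap_apply_right]
  have hcard : (Finset.univ.filter fun j => v ((Equiv.swap i i₀) j) < v i).card
      = (Finset.univ.filter fun j => v j < v i).card := by
    refine Finset.card_bij' (fun q _ => (Equiv.swap i i₀) q)
      (fun j _ => (Equiv.swap i i₀) j) ?_ ?_ ?_ ?_
    · intro q hq
      rw [Finset.mem_filter] at hq ⊢
      exact ⟨Finset.mem_univ _, hq.2⟩
    · intro j hj
      rw [Finset.mem_filter] at hj ⊢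
      refine ⟨Finset.mem_univ _, ?_⟩
      simpa using hj.2
    · intro q _; simp
    · intro j _; simp
  rw [hcard]

lemma scvic_joint_law {Ω β : Type*} [MeasurableSpace Ω] [MeasurableSpace β]
    (P : Measure Ω) [IsProbabilityMeasure P] {N : ℕ}
    (Z : Fin N → Ω → β) (hZ : ∀ i, Measurable (Z i))
    (hindep : iIndepFun Z P) :
    P.map (fun ω i => Z i ω) = Measure.pi (fun i => P.map (Z i)) := by
  haveI hprob : ∀ i, IsProbabilityMeasure (P.map (Z i)) :=
    fun i => Measure.isProbabilityMeasure_map (hZ i).aemeasurable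
  haveI : ∀ i, SigmaFinite (P.map (Z i)) := fun i => inferInstance
  symm
  apply Measure.pi_eq
  intro s hs
  rw [Measure.map_apply (measurable_pi_lambda _ hZ) (MeasurableSet.univ_pi hs)]
  have h : (fun ω i => Z i ω) ⁻¹' (Set.pi Set.univ s) = ⋂ i, Z i ⁻¹' s i := by
    ext ω; simp [Set.mem_pi]
  rw [h, hindep.meas_iInter (fun i => ⟨s i, hs i, rfl⟩)]
  exact Finset.prod_congr rfl fun i _ => (Measure.map_apply (hZ i) (hs i)).symm

lemma scvic_pi_map {β : Type*} [MeasurableSpace β] {N : ℕ}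
    (ν : Measure β) [IsProbabilityMeasure ν] (g : β → ℝ) (hg : Measurable g) :
    (Measure.pi fun _ : Fin N => ν).map (fun f i => g (f i))
      = Measure.pi (fun _ : Fin N => ν.map g) := by
  haveI h1 : IsProbabilityMeasure (ν.map g) := Measure.isProbabilityMeasure_map hg.aemeasurable
  haveI : SigmaFinite (ν.map g) := inferInstance
  symm
  apply Measure.pi_eq
  intro s hs
  have hG : Measurable fun (f : Fin N → β) (i : Fin N) => g (f i) :=
    measurable_pi_lambda _ fun i => hg.comp (measurable_pi_apply i)
  rw [Measure.map_apply hG (MeasurableSet.univ_pi hs)]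
  have h : (fun f (i : Fin N) => g (f i)) ⁻¹' Set.pi Set.univ s
      = Set.pi Set.univ (fun i => g ⁻¹' s i) := by
    ext f; simp [Set.mem_pi]
  rw [h, Measure.pi_pi]
  exact Finset.prod_congr rfl fun i _ => (Measure.map_apply hg (hs i)).symm

lemma scvic_pi_perm {N : ℕ} (ν : Measure ℝ) [IsProbabilityMeasure ν]
    (e : Equiv.Perm (Fin N)) :
    (Measure.pi fun _ : Fin N => ν).map (fun f => f ∘ e)
      = Measure.pi fun _ : Fin N => ν := by
  have h := MeasureTheory.measurePreserving_piCongrLeft (fun _ : Fin N => ν) e.symm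
  have heq : ⇑(MeasurableEquiv.piCongrLeft (fun _ : Fin N => ℝ) e.symm)
      = fun f => f ∘ e := by
    funext f
    funext b
    show (Equiv.piCongrLeft (fun _ : Fin N => ℝ) e.symm) f b = f (e b)
    have h2 := Equiv.piCongrLeft_apply_apply (fun _ : Fin N => ℝ) e.symm f (e b)
    simpa using h2
  have h3 := h.map_eq
  rw [heq] at h3
  exact h3

lemma scvic_rank_prob
    {Ω β : Type*} [MeasurableSpace Ω] [MeasurableSpace β]
    (P : Measure Ω) [IsProbabilityMeasure P] {N : ℕ}
    (Z : Fin N → Ω → β) (hZ : ∀ i, Measurable (Z i))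
    (hindep : iIndepFun Z P)
    (hident : ∀ i j, IdentDistrib (Z i) (Z j) P P)
    (g : β → ℝ) (hg : Measurable g)
    (k : ℕ) (hk2 : k ≤ N) (i₀ : Fin N) :
    (k : ENNReal) ≤ N * P ((fun ω i => g (Z i ω)) ⁻¹' scvicRankSet N k i₀) := by
  classical
  have hFmeas : Measurable fun (ω : Ω) (i : Fin N) => Z i ω := measurable_pi_lambda _ hZ
  have hGmeas : Measurable fun (f : Fin N → β) (i : Fin N) => g (f i) :=
    measurable_pi_lambda _ fun i => hg.comp (measurable_pi_apply i)
  have hsvec : Measurable fun (ω : Ω) (i : Fin N) => g (Z i ω) := hGmeas.comp hFmeas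
  set ν : Measure ℝ := (P.map (Z i₀)).map g with hν
  haveI hprob0 : IsProbabilityMeasure (P.map (Z i₀)) :=
    Measure.isProbabilityMeasure_map (hZ i₀).aemeasurable
  haveI hprobν : IsProbabilityMeasure ν := Measure.isProbabilityMeasure_map hg.aemeasurable
  have hlaw : P.map (fun ω i => g (Z i ω)) = Measure.pi fun _ : Fin N => ν := by
    have h1 : (fun (ω : Ω) (i : Fin N) => g (Z i ω))
        = (fun f i => g (f i)) ∘ (fun ω i => Z i ω) := rfl
    rw [h1, ← Measure.map_map hGmeas hFmeas, scvic_joint_law P Z hZ hindep]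
    have h2 : (fun i : Fin N => P.map (Z i)) = fun _ => P.map (Z i₀) := by
      funext i; exact (hident i i₀).map_eq
    rw [h2, scvic_pi_map _ g hg]
  set E : Fin N → Set Ω := fun i => (fun ω i' => g (Z i' ω)) ⁻¹' scvicRankSet N k i with hE
  have hEmeas : ∀ i, MeasurableSet (E i) := fun i => hsvec (scvic_measurableSet_rankSet N k i)
  have hPeq : ∀ i, P (E i) = P (E i₀) := by
    intro i
    have hreindex : Measurable fun (f : Fin N → ℝ) => f ∘ (Equiv.swap i i₀) :=
      measurable_pi_lambda _ fun b => measurable_pi_apply _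
    calc P (E i) = (P.map fun ω i' => g (Z i' ω)) (scvicRankSet N k i) :=
          (Measure.map_apply hsvec (scvic_measurableSet_rankSet N k i)).symm
      _ = (Measure.pi fun _ : Fin N => ν) (scvicRankSet N k i) := by rw [hlaw]
      _ = (Measure.pi fun _ : Fin N => ν)
            ((fun f : Fin N → ℝ => f ∘ (Equiv.swap i i₀)) ⁻¹' scvicRankSet N k i₀) := by
          rw [scvic_rankSet_swap]
      _ = ((Measure.pi fun _ : Fin N => ν).map fun f : Fin N → ℝ => f ∘ (Equiv.swap i i₀))
            (scvicRankSet N k i₀) :=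
          (Measure.map_apply hreindex (scvic_measurableSet_rankSet N k i₀)).symm
      _ = (Measure.pi fun _ : Fin N => ν) (scvicRankSet N k i₀) := by rw [scvic_pi_perm]
      _ = (P.map fun ω i' => g (Z i' ω)) (scvicRankSet N k i₀) := by rw [hlaw]
      _ = P (E i₀) := Measure.map_apply hsvec (scvic_measurableSet_rankSet N k i₀)
  have hpoint : ∀ ω, (k : ENNReal) ≤ ∑ i : Fin N, (E i).indicator (fun _ => 1) ω := by
    intro ω
    set T : Finset (Fin N) := univ.filter fun i =>
      (univ.filter fun j => g (Z j ω) < g (Z i ω)).card < k with hT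
    have hc : k ≤ T.card := scvic_count_lowrank hk2 (fun i => g (Z i ω))
    calc (k : ENNReal) ≤ (T.card : ENNReal) := by exact_mod_cast hc
      _ = ∑ _i ∈ T, (1 : ENNReal) := by rw [Finset.sum_const, nsmul_eq_mul, mul_one]
      _ = ∑ i ∈ T, (E i).indicator (fun _ => 1) ω := by
          refine Finset.sum_congr rfl fun i hi => ?_
          rw [hT, Finset.mem_filter] at hi
          have hin : ω ∈ E i := hi.2
          rw [Set.indicator_of_mem hin]
      _ ≤ ∑ i : Fin N, (E i).indicator (fun _ => 1) ω :=
          Finset.sum_le_sum_of_subset (Finset.subset_univ T)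
  calc (k : ENNReal) = ∫⁻ _ω, (k : ENNReal) ∂P := by
        rw [lintegral_const, measure_univ, mul_one]
    _ ≤ ∫⁻ ω, ∑ i : Fin N, (E i).indicator (fun _ => 1) ω ∂P := lintegral_mono hpoint
    _ = ∑ i : Fin N, ∫⁻ ω, (E i).indicator (fun _ => 1) ω ∂P :=
        lintegral_finset_sum _ fun i _ => measurable_const.indicator (hEmeas i)
    _ = ∑ _i : Fin N, P (E _i) := by
        refine Finset.sum_congr rfl fun i _ => ?_
        rw [lintegral_indicator_const (hEmeas i), one_mul]
    _ = ∑ _i : Fin N, P (E i₀) := Finset.sum_congr rfl fun i _ => hPeq i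
    _ = N * P (E i₀) := by
        rw [Finset.sum_const, Finset.card_univ, Fintype.card_fin, nsmul_eq_mul]

end Aux2

/-- split-conformal validity under interval censoring. For i.i.d. data
`(Xᵢ, Yᵢ, Yᵢ^L, Yᵢ^U)` with `Yᵢ^L ≤ Yᵢ ≤ Yᵢ^U` a.s., a fixed measurable set-valued
predictor `x ↦ ⊔ₘ [τ₀ₘ(x), τ₁ₘ(x)]`, calibration scores
`sⱼ = minₘ max(τ₀ₘ(Xⱼ) − Yⱼ^L, Yⱼ^U − τ₁ₘ(Xⱼ))` for `j = 1, …, n`, and `ϑ` the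
`⌈(1−α)(n+1)⌉`-th smallest score, the conformal set
`C̃(x) = ⋃ₘ [τ₀ₘ(x) − ϑ, τ₁ₘ(x) + ϑ]` satisfies `P(Y_{n+1} ∈ C̃(X_{n+1})) ≥ 1 − α`. -/
theorem split_conformal_validity_interval_censoring
    {Ω 𝓧 : Type*} [MeasureSpace Ω] [MeasurableSpace 𝓧]
    (P : Measure Ω) [IsProbabilityMeasure P]
    (n : ℕ) (X : Fin (n + 1) → Ω → 𝓧) (Y YL YU : Fin (n + 1) → Ω → ℝ)
    (hX : ∀ i, Measurable (X i)) (hY : ∀ i, Measurable (Y i))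
    (hYL : ∀ i, Measurable (YL i)) (hYU : ∀ i, Measurable (YU i))
    (hbound : ∀ i, ∀ᵐ ω ∂P, YL i ω ≤ Y i ω ∧ Y i ω ≤ YU i ω)
    (hindep : iIndepFun
      (fun i ω => (X i ω, Y i ω, YL i ω, YU i ω)) P)
    (hident : ∀ i j : Fin (n + 1), IdentDistrib
      (fun ω => (X i ω, Y i ω, YL i ω, YU i ω))
      (fun ω => (X j ω, Y j ω, YL j ω, YU j ω)) P P)
    (M : ℕ) (hM : 0 < M) (τ₀ τ₁ : 𝓧 → Fin M → ℝ)
    (hτ₀ : ∀ m, Measurable fun x => τ₀ x m) (hτ₁ : ∀ m, Measurable fun x => τ₁ x m)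
    (hτ : ∀ x m, τ₀ x m ≤ τ₁ x m)
    (hτdisj : ∀ x, ∀ m m' : Fin M, m < m' → τ₁ x m < τ₀ x m')
    (α : ℝ) (hα : α ∈ Set.Ioo (0 : ℝ) 1) :
    P {ω | ∃ m,
        (τ₀ (X (Fin.last n) ω) m : EReal)
            - orderStat n (fun j => Finset.univ.inf'
                (Finset.univ_nonempty_iff.mpr (Fin.pos_iff_nonempty.mp hM))
                (fun m' => max (τ₀ (X j.castSucc ω) m' - YL j.castSucc ω)
                  (YU j.castSucc ω - τ₁ (X j.castSucc ω) m'))) ⌈(1 - α) * (n + 1)⌉₊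
          ≤ (Y (Fin.last n) ω : EReal) ∧
        (Y (Fin.last n) ω : EReal)
          ≤ (τ₁ (X (Fin.last n) ω) m : EReal)
            + orderStat n (fun j => Finset.univ.inf'
                (Finset.univ_nonempty_iff.mpr (Fin.pos_iff_nonempty.mp hM))
                (fun m' => max (τ₀ (X j.castSucc ω) m' - YL j.castSucc ω)
                  (YU j.castSucc ω - τ₁ (X j.castSucc ω) m'))) ⌈(1 - α) * (n + 1)⌉₊}
      ≥ ENNReal.ofReal (1 - α) := by
  classical
  obtain ⟨hα0, hα1⟩ := hα
  set k : ℕ := ⌈(1 - α) * (n + 1)⌉₊ with hkdef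
  have hpos : (0 : ℝ) < (1 - α) * (n + 1) := by
    apply mul_pos (by linarith)
    positivity
  have hk1 : 1 ≤ k := by
    rw [hkdef]
    exact Nat.one_le_iff_ne_zero.mpr (by positivity)
  have hk2 : k ≤ n + 1 := by
    rw [hkdef]
    rw [Nat.ceil_le]
    push_cast
    nlinarith
  set β := 𝓧 × ℝ × ℝ × ℝ
  set Z : Fin (n + 1) → Ω → β := fun i ω => (X i ω, Y i ω, YL i ω, YU i ω) with hZdef
  have hZ : ∀ i, Measurable (Z i) := fun i =>
    (hX i).prodMk ((hY i).prodMk ((hYL i).prodMk (hYU i)))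
  have hMne : (Finset.univ : Finset (Fin M)).Nonempty :=
    Finset.univ_nonempty_iff.mpr (Fin.pos_iff_nonempty.mp hM)
  set g : β → ℝ := fun z => Finset.univ.inf' hMne
    (fun m => max (τ₀ z.1 m - z.2.2.1) (z.2.2.2 - τ₁ z.1 m)) with hgdef
  have hg : Measurable g := by
    apply scvic_measurable_inf'
    intro m
    have h1 : Measurable fun z : β => τ₀ z.1 m - z.2.2.1 :=
      ((hτ₀ m).comp measurable_fst).sub (measurable_snd.snd.fst)
    have h2 : Measurable fun z : β => z.2.2.2 - τ₁ z.1 m :=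
      (measurable_snd.snd.snd).sub ((hτ₁ m).comp measurable_fst)
    exact h1.max h2
  set E : Set Ω := (fun ω i => g (Z i ω)) ⁻¹' scvicRankSet (n + 1) k (Fin.last n) with hEdef
  set B : Set Ω := {ω | YL (Fin.last n) ω ≤ Y (Fin.last n) ω ∧
    Y (Fin.last n) ω ≤ YU (Fin.last n) ω} with hBdef
  have hBnull : P Bᶜ = 0 := by
    have h := hbound (Fin.last n)
    rw [ae_iff] at h
    convert h using 2
    ext ω; simp [hBdef]
  -- the key inclusion
  have hsubset : E ∩ B ⊆ {ω | ∃ m,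
      (τ₀ (X (Fin.last n) ω) m : EReal)
          - orderStat n (fun j => Finset.univ.inf'
              (Finset.univ_nonempty_iff.mpr (Fin.pos_iff_nonempty.mp hM))
              (fun m' => max (τ₀ (X j.castSucc ω) m' - YL j.castSucc ω)
                (YU j.castSucc ω - τ₁ (X j.castSucc ω) m'))) ⌈(1 - α) * (n + 1)⌉₊
        ≤ (Y (Fin.last n) ω : EReal) ∧
      (Y (Fin.last n) ω : EReal)
        ≤ (τ₁ (X (Fin.last n) ω) m : EReal)
          + orderStat n (fun j => Finset.univ.inf'
              (Finset.univ_nonempty_iff.mpr (Fin.pos_iff_nonempty.mp hM))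
              (fun m' => max (τ₀ (X j.castSucc ω) m' - YL j.castSucc ω)
                (YU j.castSucc ω - τ₁ (X j.castSucc ω) m'))) ⌈(1 - α) * (n + 1)⌉₊} := by
    rintro ω ⟨hωE, hωB⟩
    set c : ℝ := g (Z (Fin.last n) ω) with hcdef
    set w : Fin n → ℝ := fun j => g (Z j.castSucc ω) with hwdef
    have hrank : (Finset.univ.filter fun j : Fin (n+1) =>
        g (Z j ω) < c).card < k := hωE
    have hcard_le : (Finset.univ.filter fun j : Fin n => w j < c).card
        ≤ (Finset.univ.filter fun j : Fin (n+1) => g (Z j ω) < c).card := by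
      apply Finset.card_le_card_of_injOn (fun j => j.castSucc)
      · intro j hj
        rw [Finset.mem_coe, Finset.mem_filter] at hj ⊢
        exact ⟨Finset.mem_univ _, hj.2⟩
      · intro a _ b _ hab
        exact Fin.castSucc_injective n hab
    have hlt : (Finset.univ.filter fun j : Fin n => w j < c).card < k :=
      lt_of_le_of_lt hcard_le hrank
    have hle : (c : EReal) ≤ orderStat n w k := (scvic_le_orderStat_iff hk1 w c).2 hlt
    -- the goal's orderStat is the same as ours
    have horder : orderStat n (fun j => Finset.univ.inf'
        (Finset.univ_nonempty_iff.mpr (Fin.pos_iff_nonempty.mp hM))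
        (fun m' => max (τ₀ (X j.castSucc ω) m' - YL j.castSucc ω)
          (YU j.castSucc ω - τ₁ (X j.castSucc ω) m'))) ⌈(1 - α) * (n + 1)⌉₊
        = orderStat n w k := rfl
    -- pick the minimizing m
    obtain ⟨m, _, hm⟩ := Finset.exists_mem_eq_inf' hMne
      (fun m => max (τ₀ (X (Fin.last n) ω) m - YL (Fin.last n) ω)
        (YU (Fin.last n) ω - τ₁ (X (Fin.last n) ω) m))
    have hcm : max (τ₀ (X (Fin.last n) ω) m - YL (Fin.last n) ω)
        (YU (Fin.last n) ω - τ₁ (X (Fin.last n) ω) m) = c := hm.symm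
    have h1 : τ₀ (X (Fin.last n) ω) m - YL (Fin.last n) ω ≤ c := by
      rw [← hcm]; exact le_max_left _ _
    have h2 : YU (Fin.last n) ω - τ₁ (X (Fin.last n) ω) m ≤ c := by
      rw [← hcm]; exact le_max_right _ _
    obtain ⟨hb1, hb2⟩ := hωB
    refine ⟨m, ?_, ?_⟩ <;> rw [horder]
    · rcases scvic_orderStat_cases n k w with htop | ⟨t, ht⟩
      · rw [htop, EReal.sub_top]
        exact bot_le
      · rw [ht]
        rw [ht] at hle
        have hct : c ≤ t := EReal.coe_le_coe_iff.1 hle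
        rw [← EReal.coe_sub, EReal.coe_le_coe_iff]
        linarith
    · rcases scvic_orderStat_cases n k w with htop | ⟨t, ht⟩
      · rw [htop, EReal.coe_add_top]
        exact le_top
      · rw [ht]
        rw [ht] at hle
        have hct : c ≤ t := EReal.coe_le_coe_iff.1 hle
        rw [← EReal.coe_add, EReal.coe_le_coe_iff]
        linarith
  -- probability bound for E
  have hrankprob : (k : ENNReal) ≤ ((n + 1 : ℕ) : ENNReal) * P E :=
    scvic_rank_prob P Z hZ hindep hident g hg k hk2 (Fin.last n)
  have hPE : ENNReal.ofReal (1 - α) ≤ P E := by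
    have hmul : ((n + 1 : ℕ) : ENNReal) * ENNReal.ofReal (1 - α)
        ≤ ((n + 1 : ℕ) : ENNReal) * P E := by
      calc ((n + 1 : ℕ) : ENNReal) * ENNReal.ofReal (1 - α)
          = ENNReal.ofReal (((n + 1 : ℕ) : ℝ)) * ENNReal.ofReal (1 - α) := by
            rw [ENNReal.ofReal_natCast]
        _ = ENNReal.ofReal (((n + 1 : ℕ) : ℝ) * (1 - α)) := by
            rw [← ENNReal.ofReal_mul (by positivity)]
        _ ≤ ENNReal.ofReal ((k : ℝ)) := by
            apply ENNReal.ofReal_le_ofReal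
            rw [hkdef]
            have := Nat.le_ceil ((1 - α) * (n + 1))
            push_cast
            push_cast at this
            nlinarith [this]
        _ = (k : ENNReal) := ENNReal.ofReal_natCast k
        _ ≤ ((n + 1 : ℕ) : ENNReal) * P E := hrankprob
    rw [ENNReal.mul_le_mul_iff_right (by simp) (by simp)] at hmul
    exact hmul
  calc ENNReal.ofReal (1 - α) ≤ P E := hPE
    _ = P (E ∩ B) := (measure_inter_conull hBnull).symm
    _ ≤ _ := measure_mono hsubset
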